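/- Let γ > 0 and let f be a nonnegative measurable function on ℝ³. If there exists R ∈ (0,1] such that sup over 0 < r < R and x₀ ∈ ℝ³ of ((log(1/r))^{1+γ}/r)·∫_{B_r(x₀)} f(x) dx is finite, then lim_{r→0+} sup_{x₀∈ℝ³} ∫_{B_r(x₀)} f(x)/|x−x₀| dx = 0. -/

import Mathlib

open MeasureTheory Real Filter Topology

private lemma summable_aux' {p : ℝ} (hp : 1 < p) :
    Summable (fun k : ℕ => ((k : ℝ) + 1) ^ (-p)) := by
  have h0 : Summable (fun n : ℕ => (n : ℝ) ^ (-p)) :=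
    Real.summable_nat_rpow.mpr (by linarith)
  have h2 := (summable_nat_add_iff 1).mpr h0
  refine h2.congr fun k => ?_
  push_cast
  rfl

private lemma key_bound' (γ : ℝ) (hγ : 0 < γ)
    (f : EuclideanSpace ℝ (Fin 3) → ℝ) (hf : Measurable f)
    (R M : ℝ) (hR : 0 < R) (hM : 0 ≤ M)
    (h : ∀ r : ℝ, 0 < r → r < R → ∀ x₀ : EuclideanSpace ℝ (Fin 3),
        ENNReal.ofReal (Real.log (1 / r) ^ (1 + γ) / r) *
            ∫⁻ x in Metric.ball x₀ r, ENNReal.ofReal (f x) ≤ ENNReal.ofReal M)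
    (r : ℝ) (hr0 : 0 < r) (hrR : r < R) (hre : r < Real.exp (-1))
    (x₀ : EuclideanSpace ℝ (Fin 3)) :
    (∫⁻ x in Metric.ball x₀ r, ENNReal.ofReal (f x) / ENNReal.ofReal ‖x - x₀‖) ≤
      ENNReal.ofReal
        ((∑' k : ℕ, 2 * M / Real.log 2 ^ (1 + γ / 2) * ((k : ℝ) + 1) ^ (-(1 + γ / 2)))
          * Real.log (1 / r) ^ (-(γ / 2))) := by
  set L := Real.log (1 / r) with hLdef
  have hL : 1 ≤ L := by
    have h1 : Real.exp 1 ≤ 1 / r := by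
      rw [le_div_iff₀ hr0]
      have : Real.exp 1 * r < Real.exp 1 * Real.exp (-1) :=
        mul_lt_mul_of_pos_left hre (Real.exp_pos 1)
      calc Real.exp 1 * r ≤ Real.exp 1 * Real.exp (-1) := this.le
        _ = 1 := by rw [← Real.exp_add]; norm_num
    calc (1 : ℝ) = Real.log (Real.exp 1) := (Real.log_exp 1).symm
      _ ≤ L := Real.log_le_log (Real.exp_pos 1) h1
  have hlog2pos : (0 : ℝ) < Real.log 2 := Real.log_pos (by norm_num)
  have hlog2le : Real.log 2 ≤ 1 := by
    calc Real.log 2 ≤ Real.log (Real.exp 1) := by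
          apply Real.log_le_log (by norm_num)
          linarith [Real.exp_one_gt_d9]
      _ = 1 := Real.log_exp 1
  set c : ℕ → ℝ := fun k => 2 * M / Real.log 2 ^ (1 + γ / 2) * ((k : ℝ) + 1) ^ (-(1 + γ / 2))
    with hcdef
  have hcnonneg : ∀ k, 0 ≤ c k := fun k =>
    mul_nonneg (div_nonneg (by linarith) (Real.rpow_nonneg hlog2pos.le _))
      (Real.rpow_nonneg (by positivity) _)
  have hsum : Summable c := (summable_aux' (by linarith)).mul_left _
  -- per-annulus bound
  have hterm : ∀ k : ℕ,
      (∫⁻ x in Metric.ball x₀ (r / 2 ^ k) \ Metric.ball x₀ (r / 2 ^ (k + 1)),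
          ENNReal.ofReal (f x) / ENNReal.ofReal ‖x - x₀‖) ≤
        ENNReal.ofReal (c k * L ^ (-(γ / 2))) := by
    intro k
    have h2k : (0 : ℝ) < 2 ^ k := by positivity
    have hrk : 0 < r / 2 ^ k := by positivity
    have hrk1 : (0 : ℝ) < r / 2 ^ (k + 1) := by positivity
    have hrkR : r / 2 ^ k < R :=
      lt_of_le_of_lt (div_le_self hr0.le (one_le_pow₀ (by norm_num : (1:ℝ) ≤ 2))) hrR
    set Lk := Real.log (1 / (r / 2 ^ k)) with hLkdef
    have hLkeq : Lk = k * Real.log 2 + L := by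
      rw [hLkdef, hLdef, one_div, one_div, Real.log_inv, Real.log_inv,
        Real.log_div (ne_of_gt hr0) (ne_of_gt h2k), Real.log_pow]
      ring
    have hk0 : (0 : ℝ) ≤ (k : ℝ) * Real.log 2 := mul_nonneg (Nat.cast_nonneg k) hlog2pos.le
    have hLkpos : 0 < Lk := by rw [hLkeq]; linarith
    have hLleLk : L ≤ Lk := by rw [hLkeq]; linarith
    have hk1log2 : ((k : ℝ) + 1) * Real.log 2 ≤ Lk := by rw [hLkeq]; nlinarith
    -- from the hypothesis
    have hden_pos : 0 < Lk ^ (1 + γ) / (r / 2 ^ k) :=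
      div_pos (Real.rpow_pos_of_pos hLkpos _) hrk
    have hI : (∫⁻ x in Metric.ball x₀ (r / 2 ^ k), ENNReal.ofReal (f x)) ≤
        ENNReal.ofReal (M * (r / 2 ^ k) / Lk ^ (1 + γ)) := by
      have h1 : (∫⁻ x in Metric.ball x₀ (r / 2 ^ k), ENNReal.ofReal (f x)) ≤
          ENNReal.ofReal M / ENNReal.ofReal (Lk ^ (1 + γ) / (r / 2 ^ k)) := by
        rw [ENNReal.le_div_iff_mul_le (Or.inl (ENNReal.ofReal_pos.mpr hden_pos).ne')
          (Or.inl ENNReal.ofReal_ne_top), mul_comm]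
        exact h (r / 2 ^ k) hrk hrkR x₀
      refine h1.trans (le_of_eq ?_)
      rw [← ENNReal.ofReal_div_of_pos hden_pos]
      congr 1
      rw [div_div_eq_mul_div]
    have hnormbd : ∀ x ∈ Metric.ball x₀ (r / 2 ^ k) \ Metric.ball x₀ (r / 2 ^ (k + 1)),
        ENNReal.ofReal (f x) / ENNReal.ofReal ‖x - x₀‖ ≤
          ENNReal.ofReal (f x) / ENNReal.ofReal (r / 2 ^ (k + 1)) := by
      intro x hx
      refine ENNReal.div_le_div le_rfl (ENNReal.ofReal_le_ofReal ?_)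
      have hx2 := hx.2
      simp only [Metric.mem_ball, not_lt] at hx2
      rwa [← dist_eq_norm]
    have hmeasg : Measurable fun x : EuclideanSpace ℝ (Fin 3) =>
        ENNReal.ofReal (f x) / ENNReal.ofReal (r / 2 ^ (k + 1)) :=
      hf.ennreal_ofReal.div measurable_const
    calc (∫⁻ x in Metric.ball x₀ (r / 2 ^ k) \ Metric.ball x₀ (r / 2 ^ (k + 1)),
            ENNReal.ofReal (f x) / ENNReal.ofReal ‖x - x₀‖)
        ≤ ∫⁻ x in Metric.ball x₀ (r / 2 ^ k) \ Metric.ball x₀ (r / 2 ^ (k + 1)),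
            ENNReal.ofReal (f x) / ENNReal.ofReal (r / 2 ^ (k + 1)) :=
          setLIntegral_mono hmeasg hnormbd
      _ = (∫⁻ x in Metric.ball x₀ (r / 2 ^ k) \ Metric.ball x₀ (r / 2 ^ (k + 1)),
            ENNReal.ofReal (f x)) / ENNReal.ofReal (r / 2 ^ (k + 1)) := by
          simp_rw [div_eq_mul_inv]
          exact lintegral_mul_const _ hf.ennreal_ofReal
      _ ≤ (∫⁻ x in Metric.ball x₀ (r / 2 ^ k), ENNReal.ofReal (f x)) /
            ENNReal.ofReal (r / 2 ^ (k + 1)) :=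
          ENNReal.div_le_div (lintegral_mono_set Set.diff_subset) le_rfl
      _ ≤ ENNReal.ofReal (M * (r / 2 ^ k) / Lk ^ (1 + γ)) / ENNReal.ofReal (r / 2 ^ (k + 1)) :=
          ENNReal.div_le_div hI le_rfl
      _ = ENNReal.ofReal (M * (r / 2 ^ k) / Lk ^ (1 + γ) / (r / 2 ^ (k + 1))) :=
          (ENNReal.ofReal_div_of_pos hrk1).symm
      _ = ENNReal.ofReal (2 * M / Lk ^ (1 + γ)) := by
          congr 1
          have hLkne : Lk ^ (1 + γ) ≠ 0 := (Real.rpow_pos_of_pos hLkpos _).ne'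
          field_simp
          ring
      _ ≤ ENNReal.ofReal (c k * L ^ (-(γ / 2))) := by
          apply ENNReal.ofReal_le_ofReal
          have hLpos : (0 : ℝ) < L := by linarith
          have hbpos : (0 : ℝ) < ((k : ℝ) + 1) * Real.log 2 := by positivity
          have hd1 : (((k : ℝ) + 1) * Real.log 2) ^ (1 + γ / 2) * L ^ (γ / 2) ≤ Lk ^ (1 + γ) := by
            have e1 : Lk ^ (1 + γ) = Lk ^ (1 + γ / 2) * Lk ^ (γ / 2) := by
              rw [← Real.rpow_add hLkpos]; ring_nf
            rw [e1]
            exact mul_le_mul (Real.rpow_le_rpow hbpos.le hk1log2 (by linarith))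
              (Real.rpow_le_rpow hLpos.le hLleLk (by linarith))
              (Real.rpow_nonneg hLpos.le _) (Real.rpow_nonneg hLkpos.le _)
          have hd2 : 2 * M / Lk ^ (1 + γ) ≤
              2 * M / ((((k : ℝ) + 1) * Real.log 2) ^ (1 + γ / 2) * L ^ (γ / 2)) :=
            div_le_div_of_nonneg_left (by linarith)
              (by positivity) hd1
          refine hd2.trans (le_of_eq ?_)
          simp only [hcdef]
          have h1 : ((k : ℝ) + 1) ^ (1 + γ / 2) ≠ 0 :=
            (Real.rpow_pos_of_pos (by positivity) _).ne'
          have h2 : Real.log 2 ^ (1 + γ / 2) ≠ 0 := (Real.rpow_pos_of_pos hlog2pos _).ne'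
          have h3 : L ^ (γ / 2) ≠ 0 := (Real.rpow_pos_of_pos hLpos _).ne'
          rw [Real.mul_rpow (by positivity) hlog2pos.le,
            Real.rpow_neg (by positivity : (0:ℝ) ≤ (k : ℝ) + 1),
            Real.rpow_neg hLpos.le]
          field_simp
  -- covering of the punctured ball by annuli
  have hcover : Metric.ball x₀ r \ {x₀} ⊆
      ⋃ k : ℕ, (Metric.ball x₀ (r / 2 ^ k) \ Metric.ball x₀ (r / 2 ^ (k + 1))) := by
    rintro x ⟨hx1, hx2⟩
    have hd0 : 0 < dist x x₀ := dist_pos.mpr (by simpa using hx2)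
    have hdr : dist x x₀ < r := Metric.mem_ball.mp hx1
    have hex : ∃ k : ℕ, r / 2 ^ (k + 1) ≤ dist x x₀ := by
      obtain ⟨n, hn⟩ := pow_unbounded_of_one_lt (r / dist x x₀) (by norm_num : (1 : ℝ) < 2)
      refine ⟨n, ?_⟩
      rw [div_le_iff₀ (by positivity : (0 : ℝ) < 2 ^ (n + 1))]
      rw [div_lt_iff₀ hd0] at hn
      have hp : (2 : ℝ) ^ n ≤ 2 ^ (n + 1) := by
        rw [pow_succ]; nlinarith [pow_pos (by norm_num : (0:ℝ) < 2) n]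
      nlinarith [pow_pos (by norm_num : (0:ℝ) < 2) n]
    refine Set.mem_iUnion.mpr ⟨Nat.find hex, ?_, ?_⟩
    · simp only [Metric.mem_ball]
      rcases Nat.eq_zero_or_pos (Nat.find hex) with h0 | hpos
      · rw [h0]; simpa using hdr
      · have hmin := Nat.find_min hex (Nat.sub_lt hpos one_pos)
        have hk1 : Nat.find hex - 1 + 1 = Nat.find hex := Nat.succ_pred_eq_of_pos hpos
        rw [hk1] at hmin
        exact lt_of_not_ge hmin
    · simp only [Metric.mem_ball, not_lt]
      exact Nat.find_spec hex
  -- put it together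
  calc (∫⁻ x in Metric.ball x₀ r, ENNReal.ofReal (f x) / ENNReal.ofReal ‖x - x₀‖)
      = ∫⁻ x in Metric.ball x₀ r \ {x₀},
          ENNReal.ofReal (f x) / ENNReal.ofReal ‖x - x₀‖ :=
        (setLIntegral_congr (diff_null_ae_eq_self (measure_singleton x₀))).symm
    _ ≤ ∫⁻ x in ⋃ k : ℕ, (Metric.ball x₀ (r / 2 ^ k) \ Metric.ball x₀ (r / 2 ^ (k + 1))),
          ENNReal.ofReal (f x) / ENNReal.ofReal ‖x - x₀‖ := lintegral_mono_set hcover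
    _ ≤ ∑' k : ℕ, ∫⁻ x in Metric.ball x₀ (r / 2 ^ k) \ Metric.ball x₀ (r / 2 ^ (k + 1)),
          ENNReal.ofReal (f x) / ENNReal.ofReal ‖x - x₀‖ := lintegral_iUnion_le _ _
    _ ≤ ∑' k : ℕ, ENNReal.ofReal (c k * L ^ (-(γ / 2))) := ENNReal.tsum_le_tsum hterm
    _ = ENNReal.ofReal (∑' k : ℕ, c k * L ^ (-(γ / 2))) :=
        (ENNReal.ofReal_tsum_of_nonneg
          (fun k => mul_nonneg (hcnonneg k) (Real.rpow_nonneg (by linarith) _))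
          (hsum.mul_right _)).symm
    _ = ENNReal.ofReal ((∑' k : ℕ, c k) * L ^ (-(γ / 2))) := by rw [tsum_mul_right]

/-- Lemma 1.2: if `f ≥ 0` is measurable on `ℝ³` and there is `R ∈ (0,1]` such that
`sup_{0<r<R} sup_{x₀} ((log (1/r))^(1+γ)/r) ∫_{B_r(x₀)} f < ∞`, then
`lim_{r → 0+} sup_{x₀} ∫_{B_r(x₀)} f(x)/|x-x₀| dx = 0`. -/
theorem tendsto_sup_lintegral_div_dist (γ : ℝ) (hγ : 0 < γ)
    (f : EuclideanSpace ℝ (Fin 3) → ℝ) (hf : Measurable f) (hf0 : ∀ x, 0 ≤ f x)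
    (h : ∃ R : ℝ, 0 < R ∧ R ≤ 1 ∧ ∃ M : ℝ,
      ∀ r : ℝ, 0 < r → r < R → ∀ x₀ : EuclideanSpace ℝ (Fin 3),
        ENNReal.ofReal (Real.log (1 / r) ^ (1 + γ) / r) *
            ∫⁻ x in Metric.ball x₀ r, ENNReal.ofReal (f x) ≤ ENNReal.ofReal M) :
    Tendsto (fun r : ℝ => ⨆ x₀ : EuclideanSpace ℝ (Fin 3),
        ∫⁻ x in Metric.ball x₀ r, ENNReal.ofReal (f x) / ENNReal.ofReal ‖x - x₀‖)
      (𝓝[>] 0) (𝓝 0) := by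
  obtain ⟨R, hR0, hR1, M, hM⟩ := h
  have hM'0 : (0 : ℝ) ≤ max M 0 := le_max_right _ _
  have hM' : ∀ r : ℝ, 0 < r → r < R → ∀ x₀ : EuclideanSpace ℝ (Fin 3),
      ENNReal.ofReal (Real.log (1 / r) ^ (1 + γ) / r) *
          ∫⁻ x in Metric.ball x₀ r, ENNReal.ofReal (f x) ≤ ENNReal.ofReal (max M 0) :=
    fun r h1 h2 x₀ => (hM r h1 h2 x₀).trans (ENNReal.ofReal_le_ofReal (le_max_left _ _))
  have hbound : ∀ᶠ r in 𝓝[>] (0 : ℝ),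
      (⨆ x₀ : EuclideanSpace ℝ (Fin 3),
          ∫⁻ x in Metric.ball x₀ r, ENNReal.ofReal (f x) / ENNReal.ofReal ‖x - x₀‖) ≤
        ENNReal.ofReal
          ((∑' k : ℕ, 2 * max M 0 / Real.log 2 ^ (1 + γ / 2) * ((k : ℝ) + 1) ^ (-(1 + γ / 2)))
            * Real.log (1 / r) ^ (-(γ / 2))) := by
    filter_upwards [Ioo_mem_nhdsGT (lt_min hR0 (Real.exp_pos (-1)))] with r hr
    exact iSup_le fun x₀ => key_bound' γ hγ f hf R (max M 0) hR0 hM'0 hM' r hr.1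
      (hr.2.trans_le (min_le_left _ _)) (hr.2.trans_le (min_le_right _ _)) x₀
  have htend : Tendsto (fun r : ℝ => ENNReal.ofReal
      ((∑' k : ℕ, 2 * max M 0 / Real.log 2 ^ (1 + γ / 2) * ((k : ℝ) + 1) ^ (-(1 + γ / 2)))
        * Real.log (1 / r) ^ (-(γ / 2)))) (𝓝[>] (0 : ℝ)) (𝓝 0) := by
    have h1 : Tendsto (fun r : ℝ => 1 / r) (𝓝[>] (0 : ℝ)) atTop := by
      simpa [one_div] using tendsto_inv_nhdsGT_zero (𝕜 := ℝ)
    have h2 : Tendsto (fun r : ℝ => Real.log (1 / r)) (𝓝[>] (0 : ℝ)) atTop :=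
      Real.tendsto_log_atTop.comp h1
    have h3 : Tendsto (fun r : ℝ => Real.log (1 / r) ^ (-(γ / 2))) (𝓝[>] (0 : ℝ)) (𝓝 0) :=
      (tendsto_rpow_neg_atTop (by linarith)).comp h2
    have h4 := h3.const_mul
      (∑' k : ℕ, 2 * max M 0 / Real.log 2 ^ (1 + γ / 2) * ((k : ℝ) + 1) ^ (-(1 + γ / 2)))
    rw [mul_zero] at h4
    have h5 := ENNReal.tendsto_ofReal h4
    simpa using h5
  exact tendsto_of_tendsto_of_tendsto_of_le_of_le' tendsto_const_nhds htend
    (Eventually.of_forall fun r => zero_le) hbound
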